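/- (Integration by parts for a QV path and an FV path) Let X be continuous with continuous quadratic variation [X] along grids (T_N), and let A be continuous and locally of finite variation. Then the pathwise Itô integral ∫_0^t A_s dX_s exists along (T_N), and X_t A_t − X_0 A_0 = ∫_0^t A_s dX_s + ∫_0^t X_s dA_s for all t ≥ 0, where the second integral is a Riemann–Stieltjes integral; no covariation correction term appears. -/

import Mathlib

open Filter Topology Set MeasureTheory

/-- A refining sequence of time grids: each grid is a strictly increasing
sequence starting at 0 and tending to infinity; grids are nested and the
mesh tends to zero. -/
structure GridSeq where
  T : ℕ → ℕ → ℝ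
  zero : ∀ N, T N 0 = 0
  mono : ∀ N, StrictMono (T N)
  unbounded : ∀ N, Filter.Tendsto (T N) Filter.atTop Filter.atTop
  nested : ∀ N, Set.range (T N) ⊆ Set.range (T (N + 1))
  mesh : ∀ ε > 0, ∃ N₀, ∀ N ≥ N₀, ∀ i, T N (i + 1) - T N i ≤ ε

/-- The grid sum `∑_{t_i, t_{i+1} ∈ τ, t_{i+1} ≤ t} f(t_i, t_{i+1})`. -/
noncomputable def gridSum (τ : ℕ → ℝ) (f : ℝ → ℝ → ℝ) (t : ℝ) : ℝ :=
  ∑' i : ℕ, if τ (i + 1) ≤ t then f (τ i) (τ (i + 1)) else 0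

/-- The grid sums of `f` along the grid sequence `G` converge to `L` at time `t`. -/
def ConvTo (G : GridSeq) (f : ℝ → ℝ → ℝ) (t L : ℝ) : Prop :=
  Filter.Tendsto (fun N => gridSum (G.T N) f t) Filter.atTop (nhds L)

/-- `X` has continuous quadratic variation `Q` along the grid sequence `G`. -/
def HasQV (G : GridSeq) (X Q : ℝ → ℝ) : Prop :=
  ContinuousOn Q (Set.Ici 0) ∧ Q 0 = 0 ∧
    ∀ t, ConvTo G (fun u v => (X v - X u) ^ 2) t (Q t)

/-- `A` is locally of finite variation on `[0,∞)`. -/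
def LocBV (A : ℝ → ℝ) : Prop := ∀ T > 0, BoundedVariationOn A (Set.Icc 0 T)

/-- `ξ` is an admissible integrand for `X`: locally `ξ_t = g(A_t, X_t)` with
`g ∈ C¹` and `A` continuous of finite variation. -/
def Admissible (X ξ : ℝ → ℝ) : Prop :=
  ∀ T > 0, ∃ (n : ℕ) (g : (Fin n → ℝ) → ℝ → ℝ) (A : ℝ → Fin n → ℝ),
    ContDiff ℝ 1 (Function.uncurry g) ∧
    (∀ k, ContinuousOn (fun t => A t k) (Set.Icc 0 T) ∧
      BoundedVariationOn (fun t => A t k) (Set.Icc 0 T)) ∧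
    ∀ t ∈ Set.Icc (0 : ℝ) T, ξ t = g (A t) (X t)

/-! ### Auxiliary lemmas -/

lemma exists_lastIdx {τ : ℕ → ℝ} (hm : StrictMono τ) (h0 : τ 0 = 0)
    (hub : Tendsto τ atTop atTop) {t : ℝ} (ht : 0 ≤ t) :
    ∃ K, τ K ≤ t ∧ t < τ (K + 1) := by
  have h1 : ∃ m, t < τ m := (hub.eventually (eventually_gt_atTop t)).exists
  classical
  have hm₀ : t < τ (Nat.find h1) := Nat.find_spec h1
  have hpos : Nat.find h1 ≠ 0 := by
    intro h
    rw [h, h0] at hm₀; linarith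
  obtain ⟨K, hK⟩ := Nat.exists_eq_succ_of_ne_zero hpos
  refine ⟨K, ?_, by rw [← Nat.succ_eq_add_one, ← hK]; exact hm₀⟩
  by_contra h
  push_neg at h
  have h2 : Nat.find h1 ≤ K := Nat.find_le h
  omega

lemma lastIdx_iff {τ : ℕ → ℝ} (hm : StrictMono τ) {t : ℝ} {K : ℕ}
    (hK : τ K ≤ t) (hK' : t < τ (K + 1)) {i : ℕ} :
    τ (i + 1) ≤ t ↔ i < K := by
  constructor
  · intro h
    by_contra hc
    push_neg at hc
    exact absurd (le_trans (hm.monotone (by omega : K + 1 ≤ i + 1)) h) (not_le.2 hK')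
  · intro h
    exact le_trans (hm.monotone (by omega : i + 1 ≤ K)) hK

lemma gridSum_eq_sum {τ : ℕ → ℝ} (hm : StrictMono τ) {t : ℝ} {K : ℕ}
    (hK : τ K ≤ t) (hK' : t < τ (K + 1)) (f : ℝ → ℝ → ℝ) :
    gridSum τ f t = ∑ i ∈ Finset.range K, f (τ i) (τ (i + 1)) := by
  rw [gridSum, tsum_eq_sum (s := Finset.range K)]
  · exact Finset.sum_congr rfl fun i hi =>
      if_pos ((lastIdx_iff hm hK hK').2 (Finset.mem_range.1 hi))
  · intro i hi
    exact if_neg (fun h => hi (Finset.mem_range.2 ((lastIdx_iff hm hK hK').1 h)))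

lemma sum_abs_le_variation {A : ℝ → ℝ} {T : ℝ} (hBV : BoundedVariationOn A (Icc 0 T))
    {τ : ℕ → ℝ} (hm : Monotone τ) {K : ℕ} (hmem : ∀ i ≤ K, τ i ∈ Icc (0:ℝ) T) :
    ∑ i ∈ Finset.range K, |A (τ (i + 1)) - A (τ i)| ≤ (eVariationOn A (Icc 0 T)).toReal := by
  set u : ℕ → ℝ := fun j => τ (min j K) with hu
  have humono : Monotone u := fun a b hab => hm (by omega)
  have humem : ∀ j, u j ∈ Icc (0:ℝ) T := fun j => hmem _ (min_le_right j K)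
  have key := eVariationOn.sum_le (f := A) (n := K) humono humem
  have heq : ∀ i ∈ Finset.range K,
      edist (A (u (i + 1))) (A (u i)) = ENNReal.ofReal (|A (τ (i + 1)) - A (τ i)|) := by
    intro i hi
    have hi' : i < K := Finset.mem_range.1 hi
    have e1 : u i = τ i := by simp [hu, Nat.min_eq_left hi'.le]
    have e2 : u (i + 1) = τ (i + 1) := by simp [hu, Nat.min_eq_left hi']
    rw [e1, e2, edist_dist, Real.dist_eq]
  rw [Finset.sum_congr rfl heq] at key
  rw [← ENNReal.ofReal_sum_of_nonneg (fun i _ => abs_nonneg _)] at key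
  exact (ENNReal.ofReal_le_iff_le_toReal hBV).1 key

lemma sum_Ico_sub (g : ℕ → ℝ) {a b : ℕ} (h : a ≤ b) :
    ∑ j ∈ Finset.Ico a b, (g (j + 1) - g j) = g b - g a := by
  have h2 : ∑ j ∈ Finset.range a, (g (j + 1) - g j) + ∑ j ∈ Finset.Ico a b, (g (j + 1) - g j)
      = ∑ j ∈ Finset.range b, (g (j + 1) - g j) := by
    simp only [Finset.range_eq_Ico]
    exact Finset.sum_Ico_consecutive _ (Nat.zero_le a) h
  rw [Finset.sum_range_sub g, Finset.sum_range_sub g] at h2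
  linarith

lemma sum_blocks {σ : ℕ → ℕ} (hσ : Monotone σ) (h0 : σ 0 = 0) (g : ℕ → ℝ) (n : ℕ) :
    ∑ j ∈ Finset.range (σ n), g j
      = ∑ i ∈ Finset.range n, ∑ j ∈ Finset.Ico (σ i) (σ (i + 1)), g j := by
  induction n with
  | zero => simp [h0]
  | succ n ih =>
    rw [Finset.sum_range_succ, ← ih]
    have h2 := Finset.sum_Ico_consecutive g (Nat.zero_le (σ n)) (hσ (Nat.le_succ n))
    simp only [Nat.succ_eq_add_one, ← Finset.range_eq_Ico] at h2
    linarith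

lemma GridSeq.range_subset (G : GridSeq) {N M : ℕ} (h : N ≤ M) :
    Set.range (G.T N) ⊆ Set.range (G.T M) := by
  induction M, h using Nat.le_induction with
  | base => exact subset_rfl
  | succ M hNM ih => exact ih.trans (G.nested M)

lemma GridSeq.exists_embed (G : GridSeq) {N M : ℕ} (h : N ≤ M) :
    ∃ σ : ℕ → ℕ, σ 0 = 0 ∧ StrictMono σ ∧ ∀ i, G.T M (σ i) = G.T N i := by
  have hsub := G.range_subset h
  choose σ hσ using fun i => hsub (Set.mem_range_self (f := G.T N) i)
  have hmono : StrictMono σ := fun a b hab =>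
    (G.mono M).lt_iff_lt.1 (by rw [hσ a, hσ b]; exact G.mono N hab)
  have h0 : σ 0 = 0 := (G.mono M).injective (by rw [hσ 0, G.zero, G.zero])
  exact ⟨σ, h0, hmono, hσ⟩

lemma unif_aux {f : ℝ → ℝ} {T : ℝ} (hf : ContinuousOn f (Icc 0 T)) :
    ∀ ε > (0:ℝ), ∃ δ > (0:ℝ), ∀ u ∈ Icc (0:ℝ) T, ∀ v ∈ Icc (0:ℝ) T,
      |u - v| ≤ δ → |f u - f v| ≤ ε := by
  intro ε hε
  have h := isCompact_Icc.uniformContinuousOn_of_continuous hf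
  rw [Metric.uniformContinuousOn_iff] at h
  obtain ⟨δ, hδ, hδ'⟩ := h ε hε
  refine ⟨δ / 2, by linarith, fun u hu v hv huv => ?_⟩
  have := hδ' u hu v hv (by rw [Real.dist_eq]; linarith)
  rw [Real.dist_eq] at this
  linarith

lemma key_est {X A : ℝ → ℝ} {t δ ε' C V : ℝ} (ht : 0 ≤ t) (hδ : 0 ≤ δ) (hε' : 0 ≤ ε')
    {τ ρ : ℕ → ℝ} (hτ : StrictMono τ) (hρ : StrictMono ρ) (hτ0 : τ 0 = 0)
    {σ : ℕ → ℕ} (hσ0 : σ 0 = 0) (hσ : StrictMono σ) (hcomp : ∀ i, ρ (σ i) = τ i)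
    {K L : ℕ} (hK1 : τ K ≤ t) (hK2 : t < τ (K + 1)) (hL1 : ρ L ≤ t) (hL2 : t < ρ (L + 1))
    (hmesh : ∀ i, τ (i + 1) - τ i ≤ δ)
    (hC : ∀ u ∈ Icc (0:ℝ) t, |X u| ≤ C)
    (hXu : ∀ u ∈ Icc (0:ℝ) t, ∀ v ∈ Icc (0:ℝ) t, |u - v| ≤ δ → |X u - X v| ≤ ε')
    (hAu : ∀ u ∈ Icc (0:ℝ) t, ∀ v ∈ Icc (0:ℝ) t, |u - v| ≤ δ → |A u - A v| ≤ ε')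
    (hV : ∑ j ∈ Finset.range L, |A (ρ (j + 1)) - A (ρ j)| ≤ V) :
    |∑ j ∈ Finset.range L, X (ρ j) * (A (ρ (j + 1)) - A (ρ j))
      - ∑ i ∈ Finset.range K, X (τ i) * (A (τ (i + 1)) - A (τ i))|
      ≤ ε' * V + ε' * V + C * ε' := by
  set ΔA : ℕ → ℝ := fun j => A (ρ (j + 1)) - A (ρ j) with hΔA
  have hρ0 : ρ 0 = 0 := by rw [← hσ0, hcomp, hτ0]
  have hτmem : ∀ i ≤ K, τ i ∈ Icc (0:ℝ) t := fun i hi =>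
    ⟨hτ0 ▸ hτ.monotone (Nat.zero_le i), le_trans (hτ.monotone hi) hK1⟩
  have hρmem : ∀ j ≤ L, ρ j ∈ Icc (0:ℝ) t := fun j hj =>
    ⟨hρ0 ▸ hρ.monotone (Nat.zero_le j), le_trans (hρ.monotone hj) hL1⟩
  have hσKL : σ K ≤ L := by
    by_contra h
    push_neg at h
    have : ρ (L + 1) ≤ ρ (σ K) := hρ.monotone h
    rw [hcomp] at this
    linarith
  have hΔ1 : ∑ j ∈ Finset.range (σ K), |ΔA j| ≤ V :=
    le_trans (Finset.sum_le_sum_of_subset_of_nonneg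
      (Finset.range_subset_range.2 hσKL) (fun _ _ _ => abs_nonneg _)) hV
  have hΔ2 : ∑ j ∈ Finset.Ico (σ K) L, |ΔA j| ≤ V := by
    refine le_trans (Finset.sum_le_sum_of_subset_of_nonneg ?_ (fun _ _ _ => abs_nonneg _)) hV
    rw [Finset.range_eq_Ico]
    exact Finset.Ico_subset_Ico (Nat.zero_le _) le_rfl
  have split : ∑ j ∈ Finset.range L, X (ρ j) * ΔA j
      = ∑ j ∈ Finset.range (σ K), X (ρ j) * ΔA j + ∑ j ∈ Finset.Ico (σ K) L, X (ρ j) * ΔA j := by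
    simp only [Finset.range_eq_Ico]
    exact (Finset.sum_Ico_consecutive _ (Nat.zero_le _) hσKL).symm
  have telA : ∀ i, ∑ j ∈ Finset.Ico (σ i) (σ (i + 1)), ΔA j = A (τ (i + 1)) - A (τ i) := by
    intro i
    have h3 := sum_Ico_sub (fun j => A (ρ j)) (hσ.monotone (Nat.le_succ i))
    simpa only [hcomp] using h3
  have SN : ∑ i ∈ Finset.range K, X (τ i) * (A (τ (i + 1)) - A (τ i))
      = ∑ i ∈ Finset.range K, ∑ j ∈ Finset.Ico (σ i) (σ (i + 1)), X (τ i) * ΔA j := by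
    refine Finset.sum_congr rfl fun i _ => ?_
    rw [← telA i, Finset.mul_sum]
  have SM1 : ∑ j ∈ Finset.range (σ K), X (ρ j) * ΔA j
      = ∑ i ∈ Finset.range K, ∑ j ∈ Finset.Ico (σ i) (σ (i + 1)), X (ρ j) * ΔA j :=
    sum_blocks hσ.monotone hσ0 _ K
  have mainEq : ∑ j ∈ Finset.range (σ K), X (ρ j) * ΔA j
        - ∑ i ∈ Finset.range K, X (τ i) * (A (τ (i + 1)) - A (τ i))
      = ∑ i ∈ Finset.range K, ∑ j ∈ Finset.Ico (σ i) (σ (i + 1)), (X (ρ j) - X (τ i)) * ΔA j := by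
    rw [SM1, SN, ← Finset.sum_sub_distrib]
    refine Finset.sum_congr rfl fun i _ => ?_
    rw [← Finset.sum_sub_distrib]
    exact Finset.sum_congr rfl fun j _ => by ring
  have hblock : ∀ i ∈ Finset.range K, ∀ j ∈ Finset.Ico (σ i) (σ (i + 1)),
      |X (ρ j) - X (τ i)| ≤ ε' := by
    intro i hi j hj
    have hiK : i < K := Finset.mem_range.1 hi
    obtain ⟨hj1, hj2⟩ := Finset.mem_Ico.1 hj
    have hjL : j ≤ L := le_trans (le_trans hj2.le (hσ.monotone hiK)) hσKL
    have h1 : τ i ≤ ρ j := by rw [← hcomp i]; exact hρ.monotone hj1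
    have h2 : ρ j < τ (i + 1) := by rw [← hcomp (i + 1)]; exact hρ hj2
    refine hXu _ (hρmem j hjL) _ (hτmem i hiK.le) ?_
    rw [abs_sub_le_iff]
    constructor <;> [skip; linarith [hmesh i]]
    linarith [hmesh i]
  have mainBound : |∑ i ∈ Finset.range K, ∑ j ∈ Finset.Ico (σ i) (σ (i + 1)),
      (X (ρ j) - X (τ i)) * ΔA j| ≤ ε' * V := by
    calc |∑ i ∈ Finset.range K, ∑ j ∈ Finset.Ico (σ i) (σ (i + 1)), (X (ρ j) - X (τ i)) * ΔA j|
        ≤ ∑ i ∈ Finset.range K, ∑ j ∈ Finset.Ico (σ i) (σ (i + 1)), ε' * |ΔA j| := by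
          refine le_trans (Finset.abs_sum_le_sum_abs _ _) (Finset.sum_le_sum fun i hi => ?_)
          refine le_trans (Finset.abs_sum_le_sum_abs _ _) (Finset.sum_le_sum fun j hj => ?_)
          rw [abs_mul]
          exact mul_le_mul_of_nonneg_right (hblock i hi j hj) (abs_nonneg _)
      _ = ε' * ∑ j ∈ Finset.range (σ K), |ΔA j| := by
          rw [Finset.mul_sum]
          exact (sum_blocks hσ.monotone hσ0 (fun j => ε' * |ΔA j|) K).symm
      _ ≤ ε' * V := mul_le_mul_of_nonneg_left hΔ1 hε'
  have tailEq : ∑ j ∈ Finset.Ico (σ K) L, X (ρ j) * ΔA j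
      = (∑ j ∈ Finset.Ico (σ K) L, (X (ρ j) - X (τ K)) * ΔA j)
        + X (τ K) * (A (ρ L) - A (ρ (σ K))) := by
    rw [show A (ρ L) - A (ρ (σ K)) = ∑ j ∈ Finset.Ico (σ K) L, ΔA j from
      (sum_Ico_sub (fun j => A (ρ j)) hσKL).symm, Finset.mul_sum, ← Finset.sum_add_distrib]
    exact Finset.sum_congr rfl fun j _ => by ring
  have htK := hτmem K le_rfl
  have hmeshK : t - τ K ≤ δ := by linarith [hmesh K]
  have tail1 : |∑ j ∈ Finset.Ico (σ K) L, (X (ρ j) - X (τ K)) * ΔA j| ≤ ε' * V := by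
    calc |∑ j ∈ Finset.Ico (σ K) L, (X (ρ j) - X (τ K)) * ΔA j|
        ≤ ∑ j ∈ Finset.Ico (σ K) L, ε' * |ΔA j| := by
          refine le_trans (Finset.abs_sum_le_sum_abs _ _) (Finset.sum_le_sum fun j hj => ?_)
          obtain ⟨hj1, hj2⟩ := Finset.mem_Ico.1 hj
          have h1 : τ K ≤ ρ j := by rw [← hcomp K]; exact hρ.monotone hj1
          have hjL : j ≤ L := hj2.le
          have h2 : ρ j ≤ t := (hρmem j hjL).2
          rw [abs_mul]
          refine mul_le_mul_of_nonneg_right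
            (hXu _ (hρmem j hjL) _ htK ?_) (abs_nonneg _)
          rw [abs_sub_le_iff]
          constructor <;> linarith
      _ = ε' * ∑ j ∈ Finset.Ico (σ K) L, |ΔA j| := by rw [Finset.mul_sum]
      _ ≤ ε' * V := mul_le_mul_of_nonneg_left hΔ2 hε'
  have tail2 : |X (τ K) * (A (ρ L) - A (ρ (σ K)))| ≤ C * ε' := by
    rw [abs_mul]
    have hσKmem : ρ (σ K) ∈ Icc (0:ℝ) t := by rw [hcomp]; exact htK
    have hLmem : ρ L ∈ Icc (0:ℝ) t := hρmem L le_rfl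
    have hd : |ρ L - ρ (σ K)| ≤ δ := by
      have h1 : ρ (σ K) ≤ ρ L := hρ.monotone hσKL
      have h2 : ρ (σ K) = τ K := hcomp K
      rw [abs_sub_le_iff]
      constructor <;> [linarith [hLmem.2]; linarith]
    exact mul_le_mul (hC _ htK) (hAu _ hLmem _ hσKmem hd) (abs_nonneg _)
      (le_trans (abs_nonneg _) (hC _ ⟨le_rfl, ht⟩ : |X 0| ≤ C))
  calc |∑ j ∈ Finset.range L, X (ρ j) * ΔA j
      - ∑ i ∈ Finset.range K, X (τ i) * (A (τ (i + 1)) - A (τ i))|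
      = |(∑ i ∈ Finset.range K, ∑ j ∈ Finset.Ico (σ i) (σ (i + 1)), (X (ρ j) - X (τ i)) * ΔA j)
        + ((∑ j ∈ Finset.Ico (σ K) L, (X (ρ j) - X (τ K)) * ΔA j)
          + X (τ K) * (A (ρ L) - A (ρ (σ K))))| := by
        rw [split, ← mainEq, ← tailEq]
        congr 1
        ring
    _ ≤ ε' * V + (ε' * V + C * ε') := le_trans (abs_add_le _ _)
        (add_le_add mainBound (le_trans (abs_add_le _ _) (add_le_add tail1 tail2)))
    _ = ε' * V + ε' * V + C * ε' := by ring

theorem stmt18 (G : GridSeq) (X Q A : ℝ → ℝ)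
    (hX : ContinuousOn X (Set.Ici 0)) (hQ : HasQV G X Q)
    (hA : ContinuousOn A (Set.Ici 0)) (hABV : LocBV A) :
    ∀ t ≥ 0, ∃ I J,
      ConvTo G (fun u v => A u * (X v - X u)) t I ∧
      ConvTo G (fun u v => X u * (A v - A u)) t J ∧
      X t * A t - X 0 * A 0 = I + J := by
  intro t ht
  classical
  choose K hK1 hK2 using fun N => exists_lastIdx (G.mono N) (G.zero N) (G.unbounded N) ht
  set T : ℝ := t + 1 with hTdef
  have hTpos : (0:ℝ) < T := by rw [hTdef]; linarith
  have htT : Icc (0:ℝ) t ⊆ Icc (0:ℝ) T := Icc_subset_Icc le_rfl (by rw [hTdef]; linarith)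
  have hXT : ContinuousOn X (Icc 0 T) := hX.mono (Icc_subset_Ici_self)
  have hAT : ContinuousOn A (Icc 0 T) := hA.mono (Icc_subset_Ici_self)
  obtain ⟨C, hCb⟩ := isCompact_Icc.exists_bound_of_continuousOn hXT
  have hC' : ∀ u ∈ Icc (0:ℝ) t, |X u| ≤ C := fun u hu => by
    simpa [Real.norm_eq_abs] using hCb u (htT hu)
  have hC0 : (0:ℝ) ≤ C := le_trans (abs_nonneg _) (hC' 0 ⟨le_rfl, ht⟩)
  have hBV : BoundedVariationOn A (Icc 0 T) := hABV T hTpos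
  set V : ℝ := (eVariationOn A (Icc 0 T)).toReal with hVdef
  have hV0 : (0:ℝ) ≤ V := ENNReal.toReal_nonneg
  have hXunif := unif_aux hXT
  have hAunif := unif_aux hAT
  have hmem : ∀ N, ∀ i ≤ K N, G.T N i ∈ Icc (0:ℝ) t := fun N i hi =>
    ⟨(G.zero N) ▸ (G.mono N).monotone (Nat.zero_le i), le_trans ((G.mono N).monotone hi) (hK1 N)⟩
  have hVar : ∀ N, ∑ j ∈ Finset.range (K N), |A (G.T N (j + 1)) - A (G.T N j)| ≤ V := fun N =>
    sum_abs_le_variation hBV (G.mono N).monotone (fun i hi => htT (hmem N i hi))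
  set S : ℕ → ℝ := fun N => gridSum (G.T N) (fun u v => X u * (A v - A u)) t with hSdef
  have hSeq : ∀ N, S N
      = ∑ i ∈ Finset.range (K N), X (G.T N i) * (A (G.T N (i + 1)) - A (G.T N i)) :=
    fun N => gridSum_eq_sum (G.mono N) (hK1 N) (hK2 N) _
  -- Cauchy property of S
  have hcauchy : CauchySeq S := by
    rw [Metric.cauchySeq_iff']
    intro ε hε
    set ε' : ℝ := ε / (2 * V + C + 1) with hε'def
    have hden : (0:ℝ) < 2 * V + C + 1 := by linarith
    have hε'pos : 0 < ε' := div_pos hε hden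
    obtain ⟨δ₁, hδ₁, hX1⟩ := hXunif ε' hε'pos
    obtain ⟨δ₂, hδ₂, hA1⟩ := hAunif ε' hε'pos
    have hδpos : 0 < min δ₁ δ₂ := lt_min hδ₁ hδ₂
    obtain ⟨N₀, hN₀⟩ := G.mesh (min δ₁ δ₂) hδpos
    refine ⟨N₀, fun n hn => ?_⟩
    obtain ⟨σ, hσ0, hσm, hσc⟩ := GridSeq.exists_embed G hn
    rw [Real.dist_eq, hSeq, hSeq]
    have key := key_est (A := A) ht hδpos.le hε'pos.le (G.mono N₀) (G.mono n) (G.zero N₀)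
      hσ0 hσm hσc (hK1 N₀) (hK2 N₀) (hK1 n) (hK2 n) (hN₀ N₀ le_rfl)
      hC'
      (fun u hu v hv hd => hX1 u (htT hu) v (htT hv) (le_trans hd (min_le_left _ _)))
      (fun u hu v hv hd => hA1 u (htT hu) v (htT hv) (le_trans hd (min_le_right _ _)))
      (hVar n)
    refine lt_of_le_of_lt key ?_
    have hmul : ε' * (2 * V + C + 1) = ε := div_mul_cancel₀ ε hden.ne'
    nlinarith
  obtain ⟨J, hJ⟩ := cauchySeq_tendsto_of_complete hcauchy
  -- the endpoint tendsto
  have htend : Tendsto (fun N => G.T N (K N)) atTop (𝓝 t) := by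
    rw [Metric.tendsto_atTop]
    intro ε hε
    obtain ⟨N₀, hN₀⟩ := G.mesh (ε / 2) (by linarith)
    refine ⟨N₀, fun n hn => ?_⟩
    have h1 := hN₀ n hn (K n)
    have h2 := hK1 n
    have h3 := hK2 n
    rw [Real.dist_eq, abs_sub_lt_iff]
    constructor <;> linarith
  have htendW : Tendsto (fun N => G.T N (K N)) atTop (𝓝[Ici 0] t) :=
    tendsto_nhdsWithin_of_tendsto_nhds_of_eventually_within _ htend
      (Eventually.of_forall fun N => (hmem N (K N) le_rfl).1)
  have hcont : ContinuousWithinAt (fun u => X u * A u) (Ici 0) t :=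
    (hX.continuousWithinAt (mem_Ici.2 ht)).mul (hA.continuousWithinAt (mem_Ici.2 ht))
  have hPtend : Tendsto (fun N => X (G.T N (K N)) * A (G.T N (K N)) - X 0 * A 0)
      atTop (𝓝 (X t * A t - X 0 * A 0)) :=
    (hcont.tendsto.comp htendW).sub tendsto_const_nhds
  -- cross term
  set Cr : ℕ → ℝ := fun N => gridSum (G.T N) (fun u v => (X v - X u) * (A v - A u)) t with hCrdef
  have hCreq : ∀ N, Cr N = ∑ i ∈ Finset.range (K N),
      (X (G.T N (i + 1)) - X (G.T N i)) * (A (G.T N (i + 1)) - A (G.T N i)) :=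
    fun N => gridSum_eq_sum (G.mono N) (hK1 N) (hK2 N) _
  have hCrtend : Tendsto Cr atTop (𝓝 0) := by
    rw [Metric.tendsto_atTop]
    intro ε hε
    have hden : (0:ℝ) < V + 1 := by linarith
    have hε'pos : 0 < ε / (V + 1) := div_pos hε hden
    obtain ⟨δ₁, hδ₁, hX1⟩ := hXunif (ε / (V + 1)) hε'pos
    obtain ⟨N₀, hN₀⟩ := G.mesh δ₁ hδ₁
    refine ⟨N₀, fun n hn => ?_⟩
    rw [Real.dist_eq, sub_zero, hCreq]
    have hb : |∑ i ∈ Finset.range (K n),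
        (X (G.T n (i + 1)) - X (G.T n i)) * (A (G.T n (i + 1)) - A (G.T n i))|
        ≤ (ε / (V + 1)) * V := by
      calc |∑ i ∈ Finset.range (K n),
          (X (G.T n (i + 1)) - X (G.T n i)) * (A (G.T n (i + 1)) - A (G.T n i))|
          ≤ ∑ i ∈ Finset.range (K n),
            (ε / (V + 1)) * |A (G.T n (i + 1)) - A (G.T n i)| := by
            refine le_trans (Finset.abs_sum_le_sum_abs _ _) (Finset.sum_le_sum fun i hi => ?_)
            have hiK : i < K n := Finset.mem_range.1 hi
            have hm1 := hmem n i hiK.le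
            have hm2 := hmem n (i + 1) hiK
            rw [abs_mul]
            refine mul_le_mul_of_nonneg_right ?_ (abs_nonneg _)
            refine hX1 _ (htT hm2) _ (htT hm1) ?_
            have h4 := hN₀ n hn i
            have h5 : G.T n i ≤ G.T n (i + 1) := ((G.mono n).monotone (Nat.le_succ i))
            rw [abs_sub_le_iff]
            constructor <;> linarith
        _ = (ε / (V + 1)) * ∑ i ∈ Finset.range (K n), |A (G.T n (i + 1)) - A (G.T n i)| := by
            rw [Finset.mul_sum]
        _ ≤ (ε / (V + 1)) * V := mul_le_mul_of_nonneg_left (hVar n) hε'pos.le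
    refine lt_of_le_of_lt hb ?_
    have hmul : (ε / (V + 1)) * (V + 1) = ε := div_mul_cancel₀ ε hden.ne'
    nlinarith
  -- the first grid sum equals telescope minus S minus Cr
  have hFeq : ∀ N, gridSum (G.T N) (fun u v => A u * (X v - X u)) t
      = (X (G.T N (K N)) * A (G.T N (K N)) - X 0 * A 0) - S N - Cr N := by
    intro N
    rw [gridSum_eq_sum (G.mono N) (hK1 N) (hK2 N), hSeq, hCreq]
    have tele : ∑ i ∈ Finset.range (K N),
        (X (G.T N (i + 1)) * A (G.T N (i + 1)) - X (G.T N i) * A (G.T N i))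
        = X (G.T N (K N)) * A (G.T N (K N)) - X 0 * A 0 := by
      rw [Finset.sum_range_sub (fun i => X (G.T N i) * A (G.T N i)), G.zero]
    rw [← tele, ← Finset.sum_sub_distrib, ← Finset.sum_sub_distrib]
    exact Finset.sum_congr rfl fun i _ => by ring
  refine ⟨X t * A t - X 0 * A 0 - J, J, ?_, hJ, by ring⟩
  have : Tendsto (fun N => (X (G.T N (K N)) * A (G.T N (K N)) - X 0 * A 0) - S N - Cr N)
      atTop (𝓝 ((X t * A t - X 0 * A 0) - J - 0)) := (hPtend.sub hJ).sub hCrtend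
  rw [sub_zero] at this
  exact Tendsto.congr (fun N => (hFeq N).symm) this
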